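/- Let n ≥ 1 and let I be an n-element subset of [2n]. Then I is admissible if and only if both of the following hold: there do not exist a < b < c in [n] such that I has full pairs at {a,a'} and {c,c'} and an empty pair at {b,b'}; and there do not exist a < b < c in [n] such that I has empty pairs at {a,a'} and {c,c'} and a full pair at {b,b'}. -/
import Mathlib


open Finset

/-- Position of `x` in the cyclic order on `[m] = {1,…,m}` starting at `a`:
`a` has position `0`, `a+1` position `1`, …, `a-1` position `m-1`. -/
def cpos (m a x : ℕ) : ℕ := (x + m - a) % m

/-- The strict cyclic order `x <_a y` on `[m]`. -/
def clt (m a x y : ℕ) : Prop := cpos m a x < cpos m a y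

instance (m a x y : ℕ) : Decidable (clt m a x y) :=
  inferInstanceAs (Decidable (_ < _))

/-- `I` and `J` are weakly separated as subsets of `[m]`: there do not exist
`c ∈ [m]` and `x₁ <_c x₂ <_c x₃ <_c x₄` with `x₁, x₃ ∈ I∖J` and `x₂, x₄ ∈ J∖I`. -/
def WSep (m : ℕ) (I J : Finset ℕ) : Prop :=
  ¬ ∃ c x₁ x₂ x₃ x₄ : ℕ, c ∈ Finset.Icc 1 m ∧
      x₁ ∈ I \ J ∧ x₃ ∈ I \ J ∧ x₂ ∈ J \ I ∧ x₄ ∈ J \ I ∧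
      clt m c x₁ x₂ ∧ clt m c x₂ x₃ ∧ clt m c x₃ x₄

/-- A weakly separated collection of `k`-element subsets of `[m]`. -/
def IsWSColl (m k : ℕ) (C : Finset (Finset ℕ)) : Prop :=
  (∀ I ∈ C, I ⊆ Finset.Icc 1 m ∧ I.card = k) ∧
    ∀ I ∈ C, ∀ J ∈ C, WSep m I J

/-- `Ī := [2n] ∖ {i' : i ∈ I}` where `i' = 2n+1-i`. -/
def bar (n : ℕ) (I : Finset ℕ) : Finset ℕ :=
  Finset.Icc 1 (2 * n) \ I.image fun i => 2 * n + 1 - i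

/-- A collection is symmetric if it is closed under `I ↦ Ī`. -/
def IsSym (n : ℕ) (C : Finset (Finset ℕ)) : Prop := ∀ I ∈ C, bar n I ∈ C

/-- `I` has a full pair at `{a, a'}`. -/
def FullPair (n : ℕ) (I : Finset ℕ) (a : ℕ) : Prop := a ∈ I ∧ 2 * n + 1 - a ∈ I

/-- `I` has an empty pair at `{a, a'}`. -/
def EmptyPair (n : ℕ) (I : Finset ℕ) (a : ℕ) : Prop := a ∉ I ∧ 2 * n + 1 - a ∉ I

instance (n : ℕ) (I : Finset ℕ) (a : ℕ) : Decidable (FullPair n I a) :=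
  inferInstanceAs (Decidable (_ ∈ I ∧ _ ∈ I))

instance (n : ℕ) (I : Finset ℕ) (a : ℕ) : Decidable (EmptyPair n I a) :=
  inferInstanceAs (Decidable (_ ∉ I ∧ _ ∉ I))

/-- `I` is pair-free: it has no full pair. -/
def PairFree (n : ℕ) (I : Finset ℕ) : Prop :=
  ∀ a ∈ Finset.Icc 1 n, ¬ FullPair n I a

instance (n : ℕ) (I : Finset ℕ) : Decidable (PairFree n I) :=
  inferInstanceAs (Decidable (∀ a ∈ Finset.Icc 1 n, ¬ FullPair n I a))

/-- `I` is admissible: `I` and `Ī` are weakly separated. -/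
def Admissible (n : ℕ) (I : Finset ℕ) : Prop := WSep (2 * n) I (bar n I)

/-- `I` is left-handed: admissible, has at least one full pair, and every full
pair of `I` is above every empty pair of `I`. -/
def LeftHanded (n : ℕ) (I : Finset ℕ) : Prop :=
  Admissible n I ∧ (∃ a ∈ Finset.Icc 1 n, FullPair n I a) ∧
    ∀ a ∈ Finset.Icc 1 n, ∀ b ∈ Finset.Icc 1 n,
      FullPair n I a → EmptyPair n I b → a < b

lemma cpos_eq (m c x : ℕ) (hc1 : 1 ≤ c) (hc2 : c ≤ m) (hx1 : 1 ≤ x) (hx2 : x ≤ m) :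
    cpos m c x = if c ≤ x then x - c else x + m - c := by
  unfold cpos
  split_ifs with h
  · have hrw : x + m - c = (x - c) + m := by omega
    rw [hrw, Nat.add_mod_right]
    exact Nat.mod_eq_of_lt (by omega)
  · exact Nat.mod_eq_of_lt (by omega)

/-- Key combinatorial lemma: four points in cyclic order starting at `c`. -/
lemma key (m c x1 x2 x3 x4 : ℕ) (hc1 : 1 ≤ c) (hc2 : c ≤ m)
    (h11 : 1 ≤ x1) (h12 : x1 ≤ m) (h21 : 1 ≤ x2) (h22 : x2 ≤ m)
    (h31 : 1 ≤ x3) (h32 : x3 ≤ m) (h41 : 1 ≤ x4) (h42 : x4 ≤ m)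
    (c12 : clt m c x1 x2) (c23 : clt m c x2 x3) (c34 : clt m c x3 x4) :
    ((x2 < x3 ∧ x3 < x4) ∨ (x4 < x1 ∧ x1 < x2)) ∧
    ((x3 < x4 ∧ x4 < x1) ∨ (x1 < x2 ∧ x2 < x3)) := by
  unfold clt at c12 c23 c34
  simp only [cpos_eq m c x1 hc1 hc2 h11 h12, cpos_eq m c x2 hc1 hc2 h21 h22,
      cpos_eq m c x3 hc1 hc2 h31 h32, cpos_eq m c x4 hc1 hc2 h41 h42] at c12 c23 c34
  rcases le_or_gt c x1 with a1 | a1 <;> rcases le_or_gt c x2 with a2 | a2 <;>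
    rcases le_or_gt c x3 with a3 | a3 <;> rcases le_or_gt c x4 with a4 | a4 <;>
    simp [a1, a2, a3, a4, not_le.mpr] at c12 c23 c34 <;> omega

lemma clt_of (m c x y : ℕ) (hc1 : 1 ≤ c) (hc2 : c ≤ m)
    (hx2 : x ≤ m) (hy2 : y ≤ m) (hcx : c ≤ x) (hcy : c ≤ y) (hxy : x < y) :
    clt m c x y := by
  unfold clt
  rw [cpos_eq m c x hc1 hc2 (by omega) hx2, cpos_eq m c y hc1 hc2 (by omega) hy2]
  simp [hcx, hcy]
  omega

lemma full_mem_sdiff (n : ℕ) (I : Finset ℕ) (a : ℕ) (h2 : a ≤ 2 * n)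
    (ha : a ∈ I) (ha' : 2 * n + 1 - a ∈ I) : a ∈ I \ bar n I := by
  rw [Finset.mem_sdiff]
  refine ⟨ha, ?_⟩
  unfold bar
  rw [Finset.mem_sdiff]
  push_neg
  intro _
  rw [Finset.mem_image]
  exact ⟨2 * n + 1 - a, ha', by omega⟩

lemma empty_mem_sdiff (n : ℕ) (I : Finset ℕ) (a : ℕ)
    (h1 : 1 ≤ a) (h2 : a ≤ 2 * n)
    (ha : a ∉ I) (ha' : 2 * n + 1 - a ∉ I) : a ∈ bar n I \ I := by
  rw [Finset.mem_sdiff]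
  refine ⟨?_, ha⟩
  unfold bar
  rw [Finset.mem_sdiff]
  refine ⟨Finset.mem_Icc.mpr ⟨h1, h2⟩, ?_⟩
  rw [Finset.mem_image]
  rintro ⟨i, hi, hfi⟩
  rcases Nat.lt_or_ge (2 * n) i with h | h
  · omega
  · have : i = 2 * n + 1 - a := by omega
    exact ha' (this ▸ hi)

lemma mem_I_diff_bar (n : ℕ) (I : Finset ℕ) (x : ℕ)
    (hI : I ⊆ Finset.Icc 1 (2 * n)) (hx : x ∈ I \ bar n I) :
    x ∈ I ∧ 2 * n + 1 - x ∈ I ∧ 1 ≤ x ∧ x ≤ 2 * n := by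
  rw [Finset.mem_sdiff] at hx
  obtain ⟨hxI, hxb⟩ := hx
  have hxr := Finset.mem_Icc.mp (hI hxI)
  unfold bar at hxb
  rw [Finset.mem_sdiff] at hxb
  push_neg at hxb
  obtain ⟨i, hi, hfi⟩ := Finset.mem_image.mp (hxb (Finset.mem_Icc.mpr hxr))
  have hir := Finset.mem_Icc.mp (hI hi)
  have : i = 2 * n + 1 - x := by omega
  exact ⟨hxI, this ▸ hi, hxr.1, hxr.2⟩

lemma mem_bar_diff_I (n : ℕ) (I : Finset ℕ) (x : ℕ)
    (hI : I ⊆ Finset.Icc 1 (2 * n)) (hx : x ∈ bar n I \ I) :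
    x ∉ I ∧ 2 * n + 1 - x ∉ I ∧ 1 ≤ x ∧ x ≤ 2 * n := by
  rw [Finset.mem_sdiff] at hx
  obtain ⟨hxb, hxI⟩ := hx
  unfold bar at hxb
  rw [Finset.mem_sdiff] at hxb
  obtain ⟨hxr, hxim⟩ := hxb
  have hxr := Finset.mem_Icc.mp hxr
  refine ⟨hxI, ?_, hxr.1, hxr.2⟩
  intro h'
  apply hxim
  rw [Finset.mem_image]
  exact ⟨2 * n + 1 - x, h', by omega⟩

lemma full_index (n : ℕ) (I : Finset ℕ) (x : ℕ) (hx : x ∈ I)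
    (hx' : 2 * n + 1 - x ∈ I) (h1 : 1 ≤ x) (h2 : x ≤ 2 * n) :
    ∃ a, 1 ≤ a ∧ a ≤ n ∧ FullPair n I a ∧ (x = a ∨ x = 2 * n + 1 - a) := by
  rcases le_or_gt x n with h | h
  · exact ⟨x, h1, h, ⟨hx, hx'⟩, Or.inl rfl⟩
  · refine ⟨2 * n + 1 - x, by omega, by omega, ⟨hx', ?_⟩, Or.inr (by omega)⟩
    have : 2 * n + 1 - (2 * n + 1 - x) = x := by omega
    rw [this]; exact hx

lemma empty_index (n : ℕ) (I : Finset ℕ) (x : ℕ) (hx : x ∉ I)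
    (hx' : 2 * n + 1 - x ∉ I) (h1 : 1 ≤ x) (h2 : x ≤ 2 * n) :
    ∃ a, 1 ≤ a ∧ a ≤ n ∧ EmptyPair n I a ∧ (x = a ∨ x = 2 * n + 1 - a) := by
  rcases le_or_gt x n with h | h
  · exact ⟨x, h1, h, ⟨hx, hx'⟩, Or.inl rfl⟩
  · refine ⟨2 * n + 1 - x, by omega, by omega, ⟨hx', ?_⟩, Or.inr (by omega)⟩
    have : 2 * n + 1 - (2 * n + 1 - x) = x := by omega
    rw [this]; exact hx

/-- `I` is admissible iff no full pair of `I` lies strictly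
between two empty pairs and no empty pair lies strictly between two full
pairs. -/
theorem statement6 (n : ℕ) (hn : 1 ≤ n) (I : Finset ℕ)
    (hI : I ⊆ Finset.Icc 1 (2 * n)) (hcard : I.card = n) :
    Admissible n I ↔
      ((¬ ∃ a b c : ℕ, a ∈ Finset.Icc 1 n ∧ b ∈ Finset.Icc 1 n ∧
          c ∈ Finset.Icc 1 n ∧ a < b ∧ b < c ∧
          FullPair n I a ∧ EmptyPair n I b ∧ FullPair n I c) ∧
       (¬ ∃ a b c : ℕ, a ∈ Finset.Icc 1 n ∧ b ∈ Finset.Icc 1 n ∧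
          c ∈ Finset.Icc 1 n ∧ a < b ∧ b < c ∧
          EmptyPair n I a ∧ FullPair n I b ∧ EmptyPair n I c)) := by
  constructor
  · intro hadm
    constructor
    · rintro ⟨a, b, c, ha, hb, hc, hab, hbc, hfa, heb, hfc⟩
      rw [Finset.mem_Icc] at ha hb hc
      apply hadm
      refine ⟨a, a, b, c, 2 * n + 1 - b, Finset.mem_Icc.mpr ⟨ha.1, by omega⟩,
        full_mem_sdiff n I a (by omega) hfa.1 hfa.2,
        full_mem_sdiff n I c (by omega) hfc.1 hfc.2,
        empty_mem_sdiff n I b (by omega) (by omega) heb.1 heb.2, ?_, ?_, ?_, ?_⟩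
      · have h : 2 * n + 1 - (2 * n + 1 - b) = b := by omega
        refine empty_mem_sdiff n I (2 * n + 1 - b) (by omega) (by omega) heb.2 ?_
        rw [h]; exact heb.1
      · exact clt_of (2 * n) a a b (by omega) (by omega) (by omega) (by omega)
          (by omega) (by omega) (by omega)
      · exact clt_of (2 * n) a b c (by omega) (by omega) (by omega) (by omega)
          (by omega) (by omega) (by omega)
      · exact clt_of (2 * n) a c (2 * n + 1 - b) (by omega) (by omega) (by omega)
          (by omega) (by omega) (by omega) (by omega)
    · rintro ⟨a, b, c, ha, hb, hc, hab, hbc, hea, hfb, hec⟩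
      rw [Finset.mem_Icc] at ha hb hc
      apply hadm
      refine ⟨b, b, c, 2 * n + 1 - b, 2 * n + 1 - a, Finset.mem_Icc.mpr ⟨hb.1, by omega⟩,
        full_mem_sdiff n I b (by omega) hfb.1 hfb.2, ?_,
        empty_mem_sdiff n I c (by omega) (by omega) hec.1 hec.2, ?_, ?_, ?_, ?_⟩
      · have h : 2 * n + 1 - (2 * n + 1 - b) = b := by omega
        refine full_mem_sdiff n I (2 * n + 1 - b) (by omega) hfb.2 ?_
        rw [h]; exact hfb.1
      · have h : 2 * n + 1 - (2 * n + 1 - a) = a := by omega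
        refine empty_mem_sdiff n I (2 * n + 1 - a) (by omega) (by omega) hea.2 ?_
        rw [h]; exact hea.1
      · exact clt_of (2 * n) b b c (by omega) (by omega) (by omega) (by omega)
          (by omega) (by omega) (by omega)
      · exact clt_of (2 * n) b c (2 * n + 1 - b) (by omega) (by omega) (by omega)
          (by omega) (by omega) (by omega) (by omega)
      · exact clt_of (2 * n) b (2 * n + 1 - b) (2 * n + 1 - a) (by omega) (by omega)
          (by omega) (by omega) (by omega) (by omega) (by omega)
  · rintro ⟨h1, h2⟩ ⟨c, x1, x2, x3, x4, hc, m1, m3, m2, m4, c12, c23, c34⟩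
    rw [Finset.mem_Icc] at hc
    obtain ⟨hx1I, hx1I', hx11, hx12⟩ := mem_I_diff_bar n I x1 hI m1
    obtain ⟨hx3I, hx3I', hx31, hx32⟩ := mem_I_diff_bar n I x3 hI m3
    obtain ⟨hx2I, hx2I', hx21, hx22⟩ := mem_bar_diff_I n I x2 hI m2
    obtain ⟨hx4I, hx4I', hx41, hx42⟩ := mem_bar_diff_I n I x4 hI m4
    obtain ⟨f1, hf11, hf12, hf1, hf1x⟩ := full_index n I x1 hx1I hx1I' hx11 hx12
    obtain ⟨f3, hf31, hf32, hf3, hf3x⟩ := full_index n I x3 hx3I hx3I' hx31 hx32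
    obtain ⟨e2, he21, he22, he2, he2x⟩ := empty_index n I x2 hx2I hx2I' hx21 hx22
    obtain ⟨e4, he41, he42, he4, he4x⟩ := empty_index n I x4 hx4I hx4I' hx41 hx42
    obtain ⟨k1, k2⟩ := key (2 * n) c x1 x2 x3 x4 hc.1 hc.2 hx11 hx12 hx21 hx22
      hx31 hx32 hx41 hx42 c12 c23 c34
    -- dichotomy: either both full indices below both empty indices, or conversely
    have dich : (f1 < e2 ∧ f1 < e4 ∧ f3 < e2 ∧ f3 < e4) ∨
        (e2 < f1 ∧ e2 < f3 ∧ e4 < f1 ∧ e4 < f3) := by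
      by_contra hcon
      push_neg at hcon
      -- there exist full a1 and empty b1 with b1 < a1, and full a2, empty b2 with a2 < b2
      have hfe : ∀ a b : ℕ, FullPair n I a → EmptyPair n I b → a ≠ b := by
        intro a b hfa heb hab
        exact heb.1 (hab ▸ hfa.1)
      obtain ⟨hA, hB⟩ := hcon
      have ex1 : ∃ a b, 1 ≤ a ∧ a ≤ n ∧ 1 ≤ b ∧ b ≤ n ∧
          FullPair n I a ∧ EmptyPair n I b ∧ b < a := by
        · rcases lt_or_ge f1 e2 with h' | h'
          · rcases lt_or_ge f1 e4 with h'' | h''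
            · rcases lt_or_ge f3 e2 with h3 | h3
              · have h4 : e4 ≤ f3 := hA h' h'' h3
                have : e4 < f3 := lt_of_le_of_ne h4 (fun hh => hfe f3 e4 hf3 he4 hh.symm)
                exact ⟨f3, e4, hf31, hf32, he41, he42, hf3, he4, this⟩
              · have : e2 < f3 := lt_of_le_of_ne h3 (fun hh => hfe f3 e2 hf3 he2 hh.symm)
                exact ⟨f3, e2, hf31, hf32, he21, he22, hf3, he2, this⟩
            · have : e4 < f1 := lt_of_le_of_ne h'' (fun hh => hfe f1 e4 hf1 he4 hh.symm)
              exact ⟨f1, e4, hf11, hf12, he41, he42, hf1, he4, this⟩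
          · have : e2 < f1 := lt_of_le_of_ne h' (fun hh => hfe f1 e2 hf1 he2 hh.symm)
            exact ⟨f1, e2, hf11, hf12, he21, he22, hf1, he2, this⟩
      have ex2 : ∃ a b, 1 ≤ a ∧ a ≤ n ∧ 1 ≤ b ∧ b ≤ n ∧
          FullPair n I a ∧ EmptyPair n I b ∧ a < b := by
        · rcases lt_or_ge e2 f1 with h' | h'
          · rcases lt_or_ge e2 f3 with h'' | h''
            · rcases lt_or_ge e4 f1 with h3 | h3
              · have h4 : f3 ≤ e4 := hB h' h'' h3
                have : f3 < e4 := lt_of_le_of_ne h4 (hfe f3 e4 hf3 he4)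
                exact ⟨f3, e4, hf31, hf32, he41, he42, hf3, he4, this⟩
              · have : f1 < e4 := lt_of_le_of_ne h3 (hfe f1 e4 hf1 he4)
                exact ⟨f1, e4, hf11, hf12, he41, he42, hf1, he4, this⟩
            · have : f3 < e2 := lt_of_le_of_ne h'' (hfe f3 e2 hf3 he2)
              exact ⟨f3, e2, hf31, hf32, he21, he22, hf3, he2, this⟩
          · have : f1 < e2 := lt_of_le_of_ne h' (hfe f1 e2 hf1 he2)
            exact ⟨f1, e2, hf11, hf12, he21, he22, hf1, he2, this⟩
      obtain ⟨a1, b1, ha11, ha12, hb11, hb12, hfa1, heb1, hba1⟩ := ex1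
      obtain ⟨a2, b2, ha21, ha22, hb21, hb22, hfa2, heb2, hab2⟩ := ex2
      rcases lt_trichotomy a2 b1 with h | h | h
      · exact h1 ⟨a2, b1, a1, Finset.mem_Icc.mpr ⟨ha21, ha22⟩,
          Finset.mem_Icc.mpr ⟨hb11, hb12⟩, Finset.mem_Icc.mpr ⟨ha11, ha12⟩,
          h, hba1, hfa2, heb1, hfa1⟩
      · exact hfe a2 b1 hfa2 heb1 h
      · exact h2 ⟨b1, a2, b2, Finset.mem_Icc.mpr ⟨hb11, hb12⟩,
          Finset.mem_Icc.mpr ⟨ha21, ha22⟩, Finset.mem_Icc.mpr ⟨hb21, hb22⟩,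
          h, hab2, heb1, hfa2, heb2⟩
    rcases dich with ⟨d1, d2, d3, d4⟩ | ⟨d1, d2, d3, d4⟩
    · -- fulls below empties: set t = max f1 f3; x2,x4 in [t+1, 2n-t], x1,x3 outside
      omega
    · omega
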